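/- arXiv:2508.04445 — 2 statements merged into one kernel-verified Lean document; each statement's English description precedes it below -/
import Mathlib

section
/- Let G be a connected P_4-free graph whose block-cut tree has diameter 2 (equivalently, G has exactly one cut vertex and at least two blocks). Then the unique cut vertex of G is adjacent to every other vertex of G. -/
open Classical

variable {V : Type}

/-- Reachability within a vertex subset `s` of the graph `G`. -/
def ReachIn (G : SimpleGraph V) (s : Finset V) (u v : V) : Prop :=
  Relation.ReflTransGen (fun a b => a ∈ s ∧ b ∈ s ∧ G.Adj a b) u v

/-- The induced subgraph of `G` on `s` is (nonempty and) connected. -/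
def ConnIn (G : SimpleGraph V) (s : Finset V) : Prop :=
  s.Nonempty ∧ ∀ u ∈ s, ∀ v ∈ s, ReachIn G s u v

/-- The vertex set of the connected component of `v` in the induced subgraph on `s`. -/
noncomputable def compIn (G : SimpleGraph V) (s : Finset V) (v : V) : Finset V :=
  s.filter (fun u => ReachIn G s v u)

/-- Fuel-based recursion computing the treedepth of the induced subgraph of `G` on `s`
(correct whenever the fuel is at least `s.card`): treedepth of the null graph is `0`;
for a connected graph it is `1 + min_v td(G - v)`; otherwise the max over components. -/
noncomputable def tdAux (G : SimpleGraph V) : ℕ → Finset V → ℕ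
  | 0, _ => 0
  | n+1, s =>
    if hs : s = ∅ then 0
    else if ConnIn G s then
      1 + s.inf' (Finset.nonempty_of_ne_empty hs) (fun v => tdAux G n (s.erase v))
    else
      s.sup (fun v => tdAux G n (compIn G s v))

/-- The treedepth of the induced subgraph of `G` on the vertex set `s`. -/
noncomputable def tdOn (G : SimpleGraph V) (s : Finset V) : ℕ := tdAux G s.card s

/-- The treedepth of a finite graph. -/
noncomputable def td (G : SimpleGraph V) [Fintype V] : ℕ := tdOn G Finset.univ

/-- `B` induces a block-like graph: connected and with no cut vertex
(removing any vertex leaves it connected, when nonempty). -/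
def IsBlockSet (G : SimpleGraph V) (B : Finset V) : Prop :=
  ConnIn G B ∧ ∀ v ∈ B, (B.erase v).Nonempty → ConnIn G (B.erase v)

/-- `B` is a block of the induced subgraph of `G` on `s`: a maximal connected
subgraph without a cut vertex. -/
def IsBlock (G : SimpleGraph V) (s B : Finset V) : Prop :=
  B ⊆ s ∧ IsBlockSet G B ∧ ∀ B' : Finset V, B ⊆ B' → B' ⊆ s → IsBlockSet G B' → B' = B

/-- Fuel-based recursion computing the 2-treedepth of the induced subgraph of `G` on `s`
(correct whenever the fuel is at least `s.card`): `0` for the null graph;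
`1 + min_v td₂(G - v)` if the graph is a block; the max over blocks otherwise. -/
noncomputable def td2Aux (G : SimpleGraph V) : ℕ → Finset V → ℕ
  | 0, _ => 0
  | n+1, s =>
    if hs : s = ∅ then 0
    else if IsBlockSet G s then
      1 + s.inf' (Finset.nonempty_of_ne_empty hs) (fun v => td2Aux G n (s.erase v))
    else
      (s.powerset.filter (fun B => IsBlock G s B)).sup (fun B => td2Aux G n B)

/-- The 2-treedepth of the induced subgraph of `G` on `s`. -/
noncomputable def td2On (G : SimpleGraph V) (s : Finset V) : ℕ := td2Aux G s.card s

/-- The 2-treedepth of a finite graph. -/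
noncomputable def td2 (G : SimpleGraph V) [Fintype V] : ℕ := td2On G Finset.univ

/-- `G` contains a path on `m` vertices as a subgraph. -/
def HasPathOn (G : SimpleGraph V) (m : ℕ) : Prop :=
  ∃ p : Fin m → V, Function.Injective p ∧
    ∀ i : Fin m, ∀ h : i.1 + 1 < m, G.Adj (p i) (p ⟨i.1 + 1, h⟩)

/-- `G` contains an induced path on `m` vertices: `m` distinct vertices with
adjacency exactly between consecutive ones. -/
def HasInducedPathOn (G : SimpleGraph V) (m : ℕ) : Prop :=
  ∃ p : Fin m → V, Function.Injective p ∧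
    ∀ i j : Fin m, G.Adj (p i) (p j) ↔ (i.1 + 1 = j.1 ∨ j.1 + 1 = i.1)

/-- `G` is `P_t`-free: it has no induced path on `t` vertices. -/
def PtFree (G : SimpleGraph V) (t : ℕ) : Prop := ¬ HasInducedPathOn G t

/-- `v` is a cut vertex of the finite graph `G`: removing it disconnects two
vertices that were connected in `G`. -/
def IsCutVertex (G : SimpleGraph V) [Fintype V] (v : V) : Prop :=
  ∃ u w : V, u ≠ v ∧ w ≠ v ∧ ReachIn G Finset.univ u w ∧
    ¬ ReachIn G (Finset.univ.erase v) u w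

/-- Vertices of the block-cut tree of `G`: blocks of `G` together with cut vertices of `G`. -/
def BCVert (G : SimpleGraph V) [Fintype V] : Type :=
  {B : Finset V // IsBlock G Finset.univ B} ⊕ {v : V // IsCutVertex G v}

/-- The block-cut tree (forest of blocks) of `G`: a block `B` is adjacent to a
cut vertex `v` exactly when `v ∈ B`. -/
def bcTree (G : SimpleGraph V) [Fintype V] : SimpleGraph (BCVert G) where
  Adj x y := match x, y with
    | Sum.inl B, Sum.inr v => v.1 ∈ B.1
    | Sum.inr v, Sum.inl B => v.1 ∈ B.1
    | _, _ => False
  symm := ⟨by rintro (B|v) (B'|v') h <;> simp_all⟩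
  loopless := ⟨by rintro (B|v) h <;> simp_all⟩

private lemma reachIn_symm {G : SimpleGraph V} {s : Finset V} {u w : V}
    (h : ReachIn G s u w) : ReachIn G s w u := by
  have hs : Std.Symm (fun a b : V => a ∈ s ∧ b ∈ s ∧ G.Adj a b) := by
    refine ⟨?_⟩
    intro a b ⟨h1, h2, h3⟩
    exact ⟨h2, h1, h3.symm⟩
  exact Relation.ReflTransGen.symmetric.symm _ _ h

private lemma exists_nbr [Fintype V] (G : SimpleGraph V) (v : V) {x : V}
    (w : G.Walk x v) : x ≠ v →
    ∃ w', G.Adj v w' ∧ ReachIn G (Finset.univ.erase v) w' x := by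
  induction w with
  | nil => intro hx; exact absurd rfl hx
  | @cons a b c h q ih =>
      intro hx
      by_cases hb : b = c
      · subst hb
        exact ⟨a, h.symm, Relation.ReflTransGen.refl⟩
      · obtain ⟨w', hw1, hw2⟩ := ih hb
        refine ⟨w', hw1, hw2.tail ?_⟩
        exact ⟨Finset.mem_erase.mpr ⟨hb, Finset.mem_univ _⟩,
               Finset.mem_erase.mpr ⟨hx, Finset.mem_univ _⟩, h.symm⟩

theorem p4free_cut_apex {V : Type} [Fintype V] (G : SimpleGraph V) (hconn : G.Connected)
    (hfree : PtFree G 4) (v : V) (hcut : IsCutVertex G v)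
    (huniq : ∀ u : V, IsCutVertex G u → u = v)
    (htwo : ∃ B1 B2 : Finset V,
      IsBlock G Finset.univ B1 ∧ IsBlock G Finset.univ B2 ∧ B1 ≠ B2) :
    ∀ u : V, u ≠ v → G.Adj v u := by
  intro u hu
  by_contra hadj
  obtain ⟨a, b, ha, hb, -, hnab⟩ := hcut
  have ht : ∃ t, t ≠ v ∧ ¬ ReachIn G (Finset.univ.erase v) t u := by
    by_cases h : ReachIn G (Finset.univ.erase v) a u
    · exact ⟨b, hb, fun hbu => hnab (h.trans (reachIn_symm hbu))⟩
    · exact ⟨a, ha, h⟩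
  obtain ⟨t, htv, htu⟩ := ht
  obtain ⟨w, hw1, hw2⟩ := exists_nbr G v (hconn.preconnected t v).some htv
  have hwu : ¬ ReachIn G (Finset.univ.erase v) w u :=
    fun h => htu ((reachIn_symm hw2).trans h)
  obtain ⟨x0, hx1, hx2⟩ := exists_nbr G v (hconn.preconnected u v).some hu
  have key : ∀ c, ReachIn G (Finset.univ.erase v) c u → G.Adj v c →
      ∃ x y, G.Adj v x ∧ G.Adj x y ∧ ¬ G.Adj v y ∧
        ReachIn G (Finset.univ.erase v) y u := by
    intro c hc
    induction hc using Relation.ReflTransGen.head_induction_on with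
    | refl => intro h; exact absurd h hadj
    | @head a' c' step rest ih =>
        intro hvc
        by_cases h : G.Adj v c'
        · exact ih h
        · exact ⟨a', c', hvc, step.2.2, h, rest⟩
  obtain ⟨x, y, hvx, hxy, hvy, hyu⟩ := key x0 hx2 hx1
  have hxv : x ≠ v := fun h => G.irrefl (h ▸ hvx)
  have hyv : y ≠ v := by
    intro h
    subst h
    rcases (Relation.ReflTransGen.cases_head hyu) with h | ⟨c, ⟨hm, -⟩, -⟩
    · exact hu h.symm
    · exact absurd hm (by simp)
  have hwv : w ≠ v := (G.ne_of_adj hw1).symm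
  have hxu : ReachIn G (Finset.univ.erase v) x u :=
    Relation.ReflTransGen.head
      ⟨Finset.mem_erase.mpr ⟨hxv, Finset.mem_univ _⟩,
       Finset.mem_erase.mpr ⟨hyv, Finset.mem_univ _⟩, hxy⟩ hyu
  have hwx : ¬ G.Adj w x := fun h => hwu (Relation.ReflTransGen.head
      ⟨Finset.mem_erase.mpr ⟨hwv, Finset.mem_univ _⟩,
       Finset.mem_erase.mpr ⟨hxv, Finset.mem_univ _⟩, h⟩ hxu)
  have hwy : ¬ G.Adj w y := fun h => hwu (Relation.ReflTransGen.head
      ⟨Finset.mem_erase.mpr ⟨hwv, Finset.mem_univ _⟩,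
       Finset.mem_erase.mpr ⟨hyv, Finset.mem_univ _⟩, h⟩ hyu)
  have hwx' : w ≠ x := fun h => hwu (h ▸ hxu)
  have hwy' : w ≠ y := fun h => hwu (h ▸ hyu)
  have hxy' : x ≠ y := G.ne_of_adj hxy
  have nwx : ¬ G.Adj x w := fun h => hwx h.symm
  have nwy : ¬ G.Adj y w := fun h => hwy h.symm
  have nvy : ¬ G.Adj y v := fun h => hvy h.symm
  clear hyu hxu hw2 hx2 hwu htu hnab key hadj
  apply hfree
  refine ⟨![w, v, x, y], ?_, ?_⟩
  · intro i j hij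
    fin_cases i <;> fin_cases j <;> simp_all
  · intro i j
    fin_cases i <;> fin_cases j <;>
      simp [hw1, hw1.symm, hvx, hvx.symm, hxy, hxy.symm,
        hwx, hwy, hvy, nwx, nwy, nvy, SimpleGraph.irrefl]
end

section
/- Let G be a connected P_5-free graph with exactly one cut vertex v. Then there is at most one block B of G such that v is not adjacent to every vertex of B other than itself. -/
open Classical

variable {V : Type}

section AuxLemmas

variable {G : SimpleGraph V}

lemma ReachIn.mono {s t : Finset V} (hst : s ⊆ t) {a b : V} (h : ReachIn G s a b) :
    ReachIn G t a b := by
  induction h with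
  | refl => exact .refl
  | tail _ step ih => exact ih.tail ⟨hst step.1, hst step.2.1, step.2.2⟩

lemma ReachIn.symm {s : Finset V} {a b : V} (h : ReachIn G s a b) : ReachIn G s b a := by
  have hsym : Symmetric (fun a b => a ∈ s ∧ b ∈ s ∧ G.Adj a b) :=
    fun x y h => ⟨h.2.1, h.1, h.2.2.symm⟩
  exact (@Relation.ReflTransGen.stdSymm _ _ ⟨hsym⟩).symm _ _ h

lemma reach_univ [Fintype V] (hconn : G.Connected) (a b : V) :
    ReachIn G Finset.univ a b := by
  obtain ⟨w⟩ := hconn a b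
  induction w with
  | nil => exact .refl
  | cons h _ ih => exact .head ⟨Finset.mem_univ _, Finset.mem_univ _, h⟩ ih

lemma mem_compIn {s : Finset V} {u x : V} :
    x ∈ compIn G s u ↔ x ∈ s ∧ ReachIn G s u x := Finset.mem_filter

lemma reachIn_compIn {s : Finset V} {u x : V} (h : ReachIn G s u x) :
    ReachIn G (compIn G s u) u x := by
  induction h with
  | refl => exact .refl
  | tail hb step ih =>
      exact ih.tail ⟨mem_compIn.2 ⟨step.1, hb⟩,
        mem_compIn.2 ⟨step.2.1, hb.tail step⟩, step.2.2⟩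

lemma compIn_eq {s : Finset V} {u x : V} (hx : x ∈ compIn G s u) :
    compIn G s u = compIn G s x := by
  obtain ⟨hxs, hux⟩ := mem_compIn.1 hx
  ext y
  simp only [mem_compIn]
  exact ⟨fun ⟨hy, h⟩ => ⟨hy, Relation.ReflTransGen.trans hux.symm h⟩,
    fun ⟨hy, h⟩ => ⟨hy, Relation.ReflTransGen.trans hux h⟩⟩

lemma mem_comp_of_adj [Fintype V] {v u x y : V}
    (hx : x ∈ compIn G (Finset.univ.erase v) u) (hy : y ≠ v) (hadj : G.Adj x y) :
    y ∈ compIn G (Finset.univ.erase v) u := by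
  obtain ⟨hxs, hux⟩ := mem_compIn.1 hx
  have hys : y ∈ Finset.univ.erase v := Finset.mem_erase.2 ⟨hy, Finset.mem_univ _⟩
  exact mem_compIn.2 ⟨hys, hux.tail ⟨hxs, hys, hadj⟩⟩

/-- Restriction lemma: a walk in `s` ending in `T = insert v C` (where `C` is a
component of `G - v`) can be rerouted inside `T ∩ s`, starting at `a` if `a ∈ T`,
and at `v` otherwise. -/
lemma reach_restrict [Fintype V] {v u : V} {s : Finset V} (hv : v ∈ s)
    {a b : V} (h : ReachIn G s a b)
    (hb : b ∈ insert v (compIn G (Finset.univ.erase v) u)) :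
    (a ∈ insert v (compIn G (Finset.univ.erase v) u) →
      ReachIn G (insert v (compIn G (Finset.univ.erase v) u) ∩ s) a b) ∧
    (a ∉ insert v (compIn G (Finset.univ.erase v) u) →
      ReachIn G (insert v (compIn G (Finset.univ.erase v) u) ∩ s) v b) := by
  set C := compIn G (Finset.univ.erase v) u with hC
  set T := insert v C with hT
  induction h using Relation.ReflTransGen.head_induction_on with
  | refl => exact ⟨fun _ => .refl, fun ha => absurd hb ha⟩
  | @head a a' step h' ih =>
      obtain ⟨has, ha's, hadj⟩ := step
      constructor
      · intro haT
        by_cases ha'T : a' ∈ T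
        · exact .head ⟨Finset.mem_inter.2 ⟨haT, has⟩, Finset.mem_inter.2 ⟨ha'T, ha's⟩, hadj⟩
            (ih.1 ha'T)
        · have hav : a = v := by
            by_contra hav
            have haC : a ∈ C := (Finset.mem_insert.1 haT).resolve_left hav
            have ha'v : a' ≠ v := fun h => ha'T (h ▸ Finset.mem_insert_self _ _)
            exact ha'T (Finset.mem_insert_of_mem (mem_comp_of_adj haC ha'v hadj))
          exact hav ▸ ih.2 ha'T
      · intro haT
        by_cases ha'T : a' ∈ T
        · rcases Finset.mem_insert.1 ha'T with h1 | h1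
          · exact h1 ▸ ih.1 ha'T
          · exfalso
            have hav : a ≠ v := fun h => haT (h ▸ Finset.mem_insert_self _ _)
            exact haT (Finset.mem_insert_of_mem (mem_comp_of_adj h1 hav hadj.symm))
        · exact ih.2 ha'T

/-- Finding an adjacent pair (neighbor of v, non-neighbor of v) along a walk. -/
lemma find_pattern {T : Finset V} {v a b : V} (h : ReachIn G T a b)
    (ha : a = v ∨ G.Adj v a) (hb : ¬ G.Adj v b) (hbv : b ≠ v) :
    ∃ x y, x ∈ T ∧ y ∈ T ∧ x ≠ v ∧ y ≠ v ∧ G.Adj v x ∧ ¬ G.Adj v y ∧ G.Adj x y := by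
  revert ha
  induction h using Relation.ReflTransGen.head_induction_on with
  | refl =>
      rintro (rfl | h)
      · exact absurd rfl hbv
      · exact absurd h hb
  | @head a a' step h' ih =>
      intro ha
      obtain ⟨haT, ha'T, hadj⟩ := step
      by_cases h1 : a' = v ∨ G.Adj v a'
      · exact ih h1
      · push_neg at h1
        obtain ⟨ha'v, ha'adj⟩ := h1
        rcases ha with rfl | ha
        · exact absurd hadj ha'adj
        · exact ⟨a, a', haT, ha'T, fun h => (h ▸ ha).ne rfl, ha'v, ha, ha'adj, hadj⟩

lemma blockset_insert [Fintype V] (hconn : G.Connected) {v : V}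
    (huniq : ∀ u : V, IsCutVertex G u → u = v) (u : V) (hu : u ≠ v) :
    IsBlockSet G (insert v (compIn G (Finset.univ.erase v) u)) := by
  set C := compIn G (Finset.univ.erase v) u with hC
  set T := insert v C with hT
  have huC : u ∈ C := mem_compIn.2 ⟨Finset.mem_erase.2 ⟨hu, Finset.mem_univ _⟩, .refl⟩
  have hCv : ∀ x ∈ C, x ≠ v := fun x hx => (Finset.mem_erase.1 (mem_compIn.1 hx).1).1
  have hTuniv : T ∩ Finset.univ = T := Finset.inter_univ T
  constructor
  · refine ⟨⟨v, Finset.mem_insert_self _ _⟩, fun a ha b hb => ?_⟩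
    have := (reach_restrict (Finset.mem_univ v) (reach_univ hconn a b) hb).1 ha
    rwa [hTuniv] at this
  · intro y hy hne
    rcases Finset.mem_insert.1 hy with rfl | hyC
    · -- erase v: the component C itself
      have hTv : T.erase y = C := by
        ext x
        simp only [hT, Finset.mem_erase, Finset.mem_insert]
        constructor
        · rintro ⟨hxv, rfl | hx⟩
          · exact absurd rfl hxv
          · exact hx
        · intro hx; exact ⟨hCv x hx, Or.inr hx⟩
      rw [hTv]
      rw [hTv] at hne
      refine ⟨hne, fun a ha b hb => ?_⟩
      have h1 : ReachIn G (Finset.univ.erase y) u a := (mem_compIn.1 ha).2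
      have h2 : ReachIn G (Finset.univ.erase y) u b := (mem_compIn.1 hb).2
      have h1' : ReachIn G C u a := reachIn_compIn h1
      have h2' : ReachIn G C u b := reachIn_compIn h2
      exact Relation.ReflTransGen.trans h1'.symm h2'
    · -- erase y with y ≠ v : use that y is not a cut vertex
      have hyv : y ≠ v := hCv y hyC
      have hnotcut : ¬ IsCutVertex G y := fun h => hyv (huniq y h)
      have hreach : ∀ a b : V, a ≠ y → b ≠ y → ReachIn G (Finset.univ.erase y) a b := by
        intro a b hay hby
        by_contra hcon
        exact hnotcut ⟨a, b, hay, hby, reach_univ hconn a b, hcon⟩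
      have hvy : v ∈ Finset.univ.erase y :=
        Finset.mem_erase.2 ⟨fun h => hyv h.symm, Finset.mem_univ _⟩
      have hTy : T ∩ (Finset.univ.erase y) = T.erase y := by
        ext x
        simp only [Finset.mem_inter, Finset.mem_erase, Finset.mem_univ, and_true]
        tauto
      refine ⟨hne, fun a ha b hb => ?_⟩
      have haT : a ∈ T := Finset.mem_of_mem_erase ha
      have hbT : b ∈ T := Finset.mem_of_mem_erase hb
      have hay : a ≠ y := (Finset.mem_erase.1 ha).1
      have hby : b ≠ y := (Finset.mem_erase.1 hb).1
      have := (reach_restrict hvy (hreach a b hay hby) hbT).1 haT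
      rwa [hTy] at this

/-- Any block containing a vertex other than `v`, when `v` is the unique cut
vertex, is `insert v C` for the component `C` of that vertex in `G - v`. -/
lemma block_eq_insert [Fintype V] (hconn : G.Connected) {v : V}
    (huniq : ∀ u : V, IsCutVertex G u → u = v) {B : Finset V}
    (hB : IsBlock G Finset.univ B) {w : V} (hw : w ∈ B) (hwv : w ≠ v) :
    B = insert v (compIn G (Finset.univ.erase v) w) := by
  set C := compIn G (Finset.univ.erase v) w with hC
  set T := insert v C with hT
  have hTbs : IsBlockSet G T := blockset_insert hconn huniq w hwv
  have hBT : B ⊆ T := by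
    intro x hx
    by_cases hxv : x = v
    · exact hxv ▸ Finset.mem_insert_self _ _
    · refine Finset.mem_insert_of_mem (mem_compIn.2
        ⟨Finset.mem_erase.2 ⟨hxv, Finset.mem_univ _⟩, ?_⟩)
      by_cases hvB : v ∈ B
      · have hne : (B.erase v).Nonempty := ⟨w, Finset.mem_erase.2 ⟨hwv, hw⟩⟩
        have hcn := hB.2.1.2 v hvB hne
        have := hcn.2 w (Finset.mem_erase.2 ⟨hwv, hw⟩) x (Finset.mem_erase.2 ⟨hxv, hx⟩)
        exact this.mono (fun z hz => Finset.mem_erase.2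
          ⟨(Finset.mem_erase.1 hz).1, Finset.mem_univ _⟩)
      · have := hB.2.1.1.2 w hw x hx
        exact this.mono (fun z hz => Finset.mem_erase.2
          ⟨fun h => hvB (by rw [← h]; exact hz), Finset.mem_univ _⟩)
  exact (hB.2.2 T hBT (Finset.subset_univ _) hTbs).symm

/-- Building an induced `P_5` from explicit vertices. -/
lemma hasInducedPathOn_five {a b c d e : V}
    (hab : G.Adj a b) (hbc : G.Adj b c) (hcd : G.Adj c d) (hde : G.Adj d e)
    (hac : ¬ G.Adj a c) (had : ¬ G.Adj a d) (hae : ¬ G.Adj a e)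
    (hbd : ¬ G.Adj b d) (hbe : ¬ G.Adj b e) (hce : ¬ G.Adj c e)
    (dac : a ≠ c) (dad : a ≠ d) (dae : a ≠ e) (dbd : b ≠ d) (dbe : b ≠ e)
    (dce : c ≠ e) : HasInducedPathOn G 5 := by
  have dab := hab.ne; have dbc := hbc.ne; have dcd := hcd.ne; have dde := hde.ne
  have e1 := dab.symm; have e2 := dbc.symm; have e3 := dcd.symm; have e4 := dde.symm
  have e5 := dac.symm; have e6 := dad.symm; have e7 := dae.symm
  have e8 := dbd.symm; have e9 := dbe.symm; have e10 := dce.symm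
  have hba := hab.symm; have hcb := hbc.symm; have hdc := hcd.symm; have hed := hde.symm
  have hca : ¬ G.Adj c a := fun h => hac h.symm
  have hda : ¬ G.Adj d a := fun h => had h.symm
  have hea : ¬ G.Adj e a := fun h => hae h.symm
  have hdb : ¬ G.Adj d b := fun h => hbd h.symm
  have heb : ¬ G.Adj e b := fun h => hbe h.symm
  have hec : ¬ G.Adj e c := fun h => hce h.symm
  have ia : ¬ G.Adj a a := G.irrefl
  have ib : ¬ G.Adj b b := G.irrefl
  have ic : ¬ G.Adj c c := G.irrefl
  have id' : ¬ G.Adj d d := G.irrefl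
  have ie : ¬ G.Adj e e := G.irrefl
  refine ⟨![a, b, c, d, e], ?_, ?_⟩
  · intro i j hij
    fin_cases i <;> fin_cases j <;> simp_all
  · intro i j
    fin_cases i <;> fin_cases j <;> simp_all

end AuxLemmas

theorem p5free_cut_almost_apex {V : Type} [Fintype V] (G : SimpleGraph V)
    (hconn : G.Connected) (hfree : PtFree G 5) (v : V) (hcut : IsCutVertex G v)
    (huniq : ∀ u : V, IsCutVertex G u → u = v) :
    ∀ B1 B2 : Finset V, IsBlock G Finset.univ B1 → IsBlock G Finset.univ B2 →
      (¬ ∀ u ∈ B1, u ≠ v → G.Adj v u) → (¬ ∀ u ∈ B2, u ≠ v → G.Adj v u) →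
      B1 = B2 := by
  intro B1 B2 hB1 hB2 hna1 hna2
  push_neg at hna1 hna2
  obtain ⟨w1, hw1B, hw1v, hw1adj⟩ := hna1
  obtain ⟨w2, hw2B, hw2v, hw2adj⟩ := hna2
  by_contra hne
  set C1 := compIn G (Finset.univ.erase v) w1 with hC1
  set C2 := compIn G (Finset.univ.erase v) w2 with hC2
  have hB1eq : B1 = insert v C1 := block_eq_insert hconn huniq hB1 hw1B hw1v
  have hB2eq : B2 = insert v C2 := block_eq_insert hconn huniq hB2 hw2B hw2v
  have hC1v : ∀ x ∈ C1, x ≠ v := fun x hx => (Finset.mem_erase.1 (mem_compIn.1 hx).1).1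
  have hC2v : ∀ x ∈ C2, x ≠ v := fun x hx => (Finset.mem_erase.1 (mem_compIn.1 hx).1).1
  have hw1C : w1 ∈ C1 := mem_compIn.2 ⟨Finset.mem_erase.2 ⟨hw1v, Finset.mem_univ _⟩, .refl⟩
  have hw2C : w2 ∈ C2 := mem_compIn.2 ⟨Finset.mem_erase.2 ⟨hw2v, Finset.mem_univ _⟩, .refl⟩
  -- the two components are disjoint
  have hdisj : ∀ x, x ∈ C1 → x ∉ C2 := by
    intro x hx1 hx2
    exact hne (by rw [hB1eq, hB2eq,
      show C1 = C2 from (compIn_eq hx1).trans (compIn_eq hx2).symm])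
  -- no edges between C1 and C2
  have hcross : ∀ x ∈ C1, ∀ y ∈ C2, ¬ G.Adj x y := by
    intro x hx y hy hadj
    exact hdisj y (mem_comp_of_adj hx (hC2v y hy) hadj) hy
  -- find the pattern in each block
  have hbs1 : IsBlockSet G (insert v C1) := blockset_insert hconn huniq w1 hw1v
  have hbs2 : IsBlockSet G (insert v C2) := blockset_insert hconn huniq w2 hw2v
  have hr1 : ReachIn G (insert v C1) v w1 :=
    hbs1.1.2 v (Finset.mem_insert_self _ _) w1 (Finset.mem_insert_of_mem hw1C)
  have hr2 : ReachIn G (insert v C2) v w2 :=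
    hbs2.1.2 v (Finset.mem_insert_self _ _) w2 (Finset.mem_insert_of_mem hw2C)
  obtain ⟨x1, y1, hx1T, hy1T, hx1v, hy1v, hvx1, hvy1, hx1y1⟩ :=
    find_pattern hr1 (Or.inl rfl) hw1adj hw1v
  obtain ⟨x2, y2, hx2T, hy2T, hx2v, hy2v, hvx2, hvy2, hx2y2⟩ :=
    find_pattern hr2 (Or.inl rfl) hw2adj hw2v
  have hx1C : x1 ∈ C1 := (Finset.mem_insert.1 hx1T).resolve_left hx1v
  have hy1C : y1 ∈ C1 := (Finset.mem_insert.1 hy1T).resolve_left hy1v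
  have hx2C : x2 ∈ C2 := (Finset.mem_insert.1 hx2T).resolve_left hx2v
  have hy2C : y2 ∈ C2 := (Finset.mem_insert.1 hy2T).resolve_left hy2v
  -- assemble the induced P5 : y1 - x1 - v - x2 - y2
  exact hfree (hasInducedPathOn_five hx1y1.symm hvx1.symm hvx2 hx2y2
    (fun h => hvy1 h.symm) (fun h => hcross y1 hy1C x2 hx2C h)
    (fun h => hcross y1 hy1C y2 hy2C h) (fun h => hcross x1 hx1C x2 hx2C h)
    (fun h => hcross x1 hx1C y2 hy2C h) hvy2
    hy1v (fun h => hdisj y1 hy1C (h ▸ hx2C)) (fun h => hdisj y1 hy1C (h ▸ hy2C))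
    (fun h => hdisj x1 hx1C (h ▸ hx2C)) (fun h => hdisj x1 hx1C (h ▸ hy2C)) (Ne.symm hy2v))
end
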